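/- Let G be a finite group, (H1,H2,H3,H4) an Ingleton offender in G, and N a normal subgroup of G with N ≤ H1 ∩ H2. Then (H1, H2, NH3, H4) is also an Ingleton offender, where NH3 is the subgroup product of N and H3. -/

import Mathlib

open Subgroup

section Aux
variable {G : Type*} [Group G] [Finite G]

private lemma card_inf_mul_relindex (H K : Subgroup G) :
    Nat.card (H ⊓ K : Subgroup G) * H.relIndex K = Nat.card K := by
  have e : (H.subgroupOf K) ≃ (H ⊓ K : Subgroup G) :=
    { toFun := fun x => ⟨x.1.1, Subgroup.mem_subgroupOf.mp x.2, x.1.2⟩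
      invFun := fun x => ⟨⟨x.1, x.2.2⟩, Subgroup.mem_subgroupOf.mpr x.2.1⟩
      left_inv := fun x => rfl
      right_inv := fun x => rfl }
  rw [← Nat.card_congr e]
  exact Subgroup.card_mul_index (H.subgroupOf K)

private lemma card_sup_inf (N M : Subgroup G) [N.Normal] :
    Nat.card (N ⊔ M : Subgroup G) * Nat.card (N ⊓ M : Subgroup G)
      = Nat.card N * Nat.card M := by
  have h1 := card_inf_mul_relindex N M
  have h2 := card_inf_mul_relindex N (N ⊔ M)
  rw [inf_sup_self, Subgroup.relIndex_sup_left] at h2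
  rw [← h2, ← h1]
  ring

private lemma inf_sup_left_eq (N H3 A : Subgroup G) [N.Normal] (h : N ≤ A) :
    A ⊓ (N ⊔ H3) = N ⊔ (A ⊓ H3) := by
  apply le_antisymm
  · intro x hx
    obtain ⟨hxA, hxS⟩ := Subgroup.mem_inf.mp hx
    rw [← SetLike.mem_coe, Subgroup.normal_mul] at hxS
    obtain ⟨n, hn, h3, hh3, rfl⟩ := hxS
    have hA : h3 ∈ A := by
      have := mul_mem (inv_mem (h hn)) hxA
      simpa [mul_assoc] using this
    exact mul_mem ((le_sup_left : N ≤ N ⊔ (A ⊓ H3)) hn)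
      ((le_sup_right : A ⊓ H3 ≤ N ⊔ (A ⊓ H3)) ⟨hA, hh3⟩)
  · exact sup_le (le_inf h le_sup_left) (inf_le_inf le_rfl le_sup_right)

private lemma cardA (N H3 A : Subgroup G) [N.Normal] (h : N ≤ A) :
    Nat.card (A ⊓ (N ⊔ H3) : Subgroup G) * Nat.card (N ⊓ H3 : Subgroup G)
      = Nat.card N * Nat.card (A ⊓ H3 : Subgroup G) := by
  have hM : N ⊓ (A ⊓ H3) = N ⊓ H3 := by
    rw [← inf_assoc, inf_eq_left.mpr h]
  rw [inf_sup_left_eq N H3 A h, ← card_sup_inf N (A ⊓ H3), hM]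

private lemma cardB (N H3 H4 : Subgroup G) [N.Normal] :
    Nat.card ((N ⊔ H3) ⊓ H4 : Subgroup G) * Nat.card (N ⊓ H3 : Subgroup G)
      ≤ Nat.card N * Nat.card (H3 ⊓ H4 : Subgroup G) := by
  classical
  set S := {p : N × H4 // (p.1 : G) * p.2 ∈ H3} with hS
  -- injection from D × (N ⊓ H3) into S
  let ν : G → G := fun g => if h : ∃ x, x ∈ N ∧ x * g ∈ H3 then h.choose else 1
  have hν : ∀ g : G, (∃ x, x ∈ N ∧ x * g ∈ H3) → ν g ∈ N ∧ ν g * g ∈ H3 := by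
    intro g hg
    simp only [ν, dif_pos hg]
    exact hg.choose_spec
  have hex : ∀ d : ((N ⊔ H3) ⊓ H4 : Subgroup G), ∃ x, x ∈ N ∧ x * (d : G) ∈ H3 := by
    rintro ⟨d, hd1, hd2⟩
    have : d ∈ (↑(N ⊔ H3) : Set G) := hd1
    rw [Subgroup.normal_mul] at this
    obtain ⟨n, hn, h3, hh3, rfl⟩ := this
    exact ⟨n⁻¹, inv_mem hn, by simpa [mul_assoc] using hh3⟩
  have inj1 : Nat.card (((N ⊔ H3) ⊓ H4 : Subgroup G) × (N ⊓ H3 : Subgroup G)) ≤ Nat.card S := by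
    apply Nat.card_le_card_of_injective
      (f := fun p => (⟨(⟨(p.2 : G) * ν (p.1 : G),
          mul_mem p.2.2.1 (hν _ (hex p.1)).1⟩,
          ⟨(p.1 : G), p.1.2.2⟩),
          by
            have h1 := (hν _ (hex p.1)).2
            have h2 : ((p.2 : G)) ∈ H3 := p.2.2.2
            simpa [mul_assoc] using mul_mem h2 h1⟩ : S))
    rintro ⟨d1, m1⟩ ⟨d2, m2⟩ hpq
    simp only [Subtype.mk.injEq, Prod.mk.injEq] at hpq
    obtain ⟨h1, h2⟩ := hpq
    have hd : d1 = d2 := Subtype.ext h2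
    subst hd
    have hm : (m1 : G) = m2 := by
      have := mul_right_cancel h1
      exact this
    exact Prod.ext rfl (Subtype.ext hm)
  -- injection from S into N × (H3 ⊓ H4)
  let c : G → G := fun g => if h : ∃ x, x ∈ H4 ∧ g * x ∈ H3 then h.choose else 1
  have hc : ∀ g : G, (∃ x, x ∈ H4 ∧ g * x ∈ H3) → c g ∈ H4 ∧ g * c g ∈ H3 := by
    intro g hg
    simp only [c, dif_pos hg]
    exact hg.choose_spec
  have inj2 : Nat.card S ≤ Nat.card (N × (H3 ⊓ H4 : Subgroup G)) := by
    apply Nat.card_le_card_of_injective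
      (f := fun p => ((p.1.1 : N),
        (⟨(c (p.1.1 : G))⁻¹ * (p.1.2 : G),
          by
            have hcc := hc (p.1.1 : G) ⟨(p.1.2 : G), p.1.2.2, p.2⟩
            have h1 : ((p.1.1 : G) * c (p.1.1 : G))⁻¹ * ((p.1.1 : G) * p.1.2) ∈ H3 :=
              mul_mem (inv_mem hcc.2) p.2
            refine Subgroup.mem_inf.mpr ⟨?_, ?_⟩
            · simpa [mul_assoc, mul_inv_rev] using h1
            · exact mul_mem (inv_mem hcc.1) p.1.2.2⟩ : (H3 ⊓ H4 : Subgroup G))))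
    rintro ⟨⟨n1, h1⟩, hp1⟩ ⟨⟨n2, h2⟩, hp2⟩ hpq
    simp only [Prod.mk.injEq, Subtype.mk.injEq] at hpq
    obtain ⟨e1, e2⟩ := hpq
    have en : (n1 : G) = n2 := congrArg Subtype.val e1
    have : (n1 : N) = n2 := e1
    rw [en] at e2
    have eh : (h1 : G) = h2 := mul_left_cancel e2
    apply Subtype.ext
    exact Prod.ext (Subtype.ext en) (Subtype.ext eh)
  have e1 : Nat.card (((N ⊔ H3) ⊓ H4 : Subgroup G) × (N ⊓ H3 : Subgroup G))
      = Nat.card ((N ⊔ H3) ⊓ H4 : Subgroup G) * Nat.card (N ⊓ H3 : Subgroup G) :=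
    Nat.card_prod _ _
  have e2 : Nat.card (N × (H3 ⊓ H4 : Subgroup G))
      = Nat.card N * Nat.card (H3 ⊓ H4 : Subgroup G) := Nat.card_prod _ _
  omega

end Aux

theorem stmt17 {G : Type*} [Group G] [Finite G] (H1 H2 H3 H4 N : Subgroup G)
    [N.Normal] (hN : N ≤ H1 ⊓ H2)
    (hoff : Nat.card (H1 : Subgroup G) * Nat.card (H2 : Subgroup G) * Nat.card (H3 ⊓ H4 : Subgroup G) * Nat.card (H1 ⊓ H2 ⊓ H3 : Subgroup G) * Nat.card (H1 ⊓ H2 ⊓ H4 : Subgroup G) < Nat.card (H1 ⊓ H2 : Subgroup G) * Nat.card (H1 ⊓ H3 : Subgroup G) * Nat.card (H1 ⊓ H4 : Subgroup G) * Nat.card (H2 ⊓ H3 : Subgroup G) * Nat.card (H2 ⊓ H4 : Subgroup G)) :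
    Nat.card (H1 : Subgroup G) * Nat.card (H2 : Subgroup G) * Nat.card ((N ⊔ H3) ⊓ H4 : Subgroup G) * Nat.card (H1 ⊓ H2 ⊓ (N ⊔ H3) : Subgroup G) * Nat.card (H1 ⊓ H2 ⊓ H4 : Subgroup G) < Nat.card (H1 ⊓ H2 : Subgroup G) * Nat.card (H1 ⊓ (N ⊔ H3) : Subgroup G) * Nat.card (H1 ⊓ H4 : Subgroup G) * Nat.card (H2 ⊓ (N ⊔ H3) : Subgroup G) * Nat.card (H2 ⊓ H4 : Subgroup G) := by
  have hA1 := cardA N H3 H1 (hN.trans inf_le_left)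
  have hA2 := cardA N H3 H2 (hN.trans inf_le_right)
  have hA12 := cardA N H3 (H1 ⊓ H2) hN
  have hB := cardB N H3 H4
  set a := Nat.card N
  set b := Nat.card (N ⊓ H3 : Subgroup G)
  have hb : 0 < b := Nat.card_pos
  refine lt_of_mul_lt_mul_right ?_ (Nat.zero_le (b * b))
  calc Nat.card H1 * Nat.card H2 * Nat.card ((N ⊔ H3) ⊓ H4 : Subgroup G) *
        Nat.card (H1 ⊓ H2 ⊓ (N ⊔ H3) : Subgroup G) * Nat.card (H1 ⊓ H2 ⊓ H4 : Subgroup G) * (b * b)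
      = (Nat.card H1 * Nat.card H2 * Nat.card (H1 ⊓ H2 ⊓ H4 : Subgroup G)) *
        ((Nat.card ((N ⊔ H3) ⊓ H4 : Subgroup G) * b) *
         (Nat.card (H1 ⊓ H2 ⊓ (N ⊔ H3) : Subgroup G) * b)) := by ring
    _ ≤ (Nat.card H1 * Nat.card H2 * Nat.card (H1 ⊓ H2 ⊓ H4 : Subgroup G)) *
        ((a * Nat.card (H3 ⊓ H4 : Subgroup G)) * (a * Nat.card (H1 ⊓ H2 ⊓ H3 : Subgroup G))) := by
        rw [hA12]
        exact Nat.mul_le_mul_left _ (Nat.mul_le_mul_right _ hB)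
    _ = (a * a) * (Nat.card H1 * Nat.card H2 * Nat.card (H3 ⊓ H4 : Subgroup G) *
        Nat.card (H1 ⊓ H2 ⊓ H3 : Subgroup G) * Nat.card (H1 ⊓ H2 ⊓ H4 : Subgroup G)) := by ring
    _ < (a * a) * (Nat.card (H1 ⊓ H2 : Subgroup G) * Nat.card (H1 ⊓ H3 : Subgroup G) *
        Nat.card (H1 ⊓ H4 : Subgroup G) * Nat.card (H2 ⊓ H3 : Subgroup G) *
        Nat.card (H2 ⊓ H4 : Subgroup G)) := by
        exact mul_lt_mul_of_pos_left hoff (Nat.mul_pos Nat.card_pos Nat.card_pos)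
    _ = (Nat.card (H1 ⊓ H2 : Subgroup G) * Nat.card (H1 ⊓ H4 : Subgroup G) *
        Nat.card (H2 ⊓ H4 : Subgroup G)) *
        ((a * Nat.card (H1 ⊓ H3 : Subgroup G)) * (a * Nat.card (H2 ⊓ H3 : Subgroup G))) := by ring
    _ = Nat.card (H1 ⊓ H2 : Subgroup G) * Nat.card (H1 ⊓ (N ⊔ H3) : Subgroup G) *
        Nat.card (H1 ⊓ H4 : Subgroup G) * Nat.card (H2 ⊓ (N ⊔ H3) : Subgroup G) *
        Nat.card (H2 ⊓ H4 : Subgroup G) * (b * b) := by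
        rw [← hA1, ← hA2]; ring
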